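/- Let G be a disconnected graph with components G₁,…,G_ℓ (ℓ ≥ 2), each of order at least 2, and let S' be a convex set of G∘Ḡ such that S' ∩ V(Ḡ) contains two vertices x̄, ȳ that are nonadjacent in Ḡ. If additionally S' ∩ V(G_i) ≠ ∅ for every component G_i, then S' = V(G∘Ḡ). -/

import Mathlib

open SimpleGraph

/-- The complementary prism `G ∘ Ḡ`: left copies (`Sum.inl`) form `G`,
right copies (`Sum.inr`) form the complement `Gᶜ`, and each `inl v` is
matched to `inr v`. -/
def compPrism {V : Type*} (G : SimpleGraph V) : SimpleGraph (V ⊕ V) where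
  Adj x y :=
    match x, y with
    | Sum.inl a, Sum.inl b => G.Adj a b
    | Sum.inr a, Sum.inr b => Gᶜ.Adj a b
    | Sum.inl a, Sum.inr b => a = b
    | Sum.inr a, Sum.inl b => a = b
  symm := by
    constructor; rintro (a | a) (b | b) h <;> simp_all [compl_adj, adj_comm, eq_comm]
  loopless := by
    constructor; rintro (a | a) h <;> simp_all

/-- `v` lies on some shortest `u`-`w` path in `G`. -/
def inInterval {V : Type*} (G : SimpleGraph V) (u w v : V) : Prop :=
  ∃ p : G.Walk u w, p.IsPath ∧ p.length = G.dist u w ∧ v ∈ p.support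

/-- A set is geodesically convex if it contains every vertex on any shortest
path between two of its vertices. -/
def IsGeodConvex {V : Type*} (G : SimpleGraph V) (S : Set V) : Prop :=
  ∀ u ∈ S, ∀ w ∈ S, ∀ v, inInterval G u w v → v ∈ S

/-- The geodesic convex hull of a set of vertices. -/
def geodHull {V : Type*} (G : SimpleGraph V) (S : Set V) : Set V :=
  ⋂₀ {T | S ⊆ T ∧ IsGeodConvex G T}

/-- The convexity number: the maximum cardinality of a proper convex set. -/
noncomputable def convexityNumber {V : Type*} (G : SimpleGraph V) : ℕ :=
  sSup {n | ∃ S : Set V, IsGeodConvex G S ∧ S ≠ Set.univ ∧ S.ncard = n}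

lemma mid_dist {V : Type*} {G : SimpleGraph V} {a b m : V}
    (hab : ¬ G.Adj a b) (hne : a ≠ b) (h1 : G.Adj a m) (h2 : G.Adj m b) :
    inInterval G a b m := by
  refine ⟨Walk.cons h1 (Walk.cons h2 Walk.nil), ?_, ?_, by simp⟩
  · simp [Walk.isPath_def, hne, h1.ne, h2.ne]
  · have hle : G.dist a b ≤ 2 := by
      simpa using dist_le (Walk.cons h1 (Walk.cons h2 Walk.nil))
    have h0 : G.dist a b ≠ 0 := by
      intro h
      exact hne ((Reachable.dist_eq_zero_iff ⟨Walk.cons h1 (Walk.cons h2 Walk.nil)⟩).mp h)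
    have h1' : G.dist a b ≠ 1 := fun h => hab (dist_eq_one_iff_adj.mp h)
    simp only [Walk.length_cons, Walk.length_nil]
    omega

lemma mem_of_mid {V : Type*} {G : SimpleGraph V} {S : Set V}
    (hconv : IsGeodConvex G S) {a b m : V} (ha : a ∈ S) (hb : b ∈ S)
    (hab : ¬ G.Adj a b) (hne : a ≠ b) (h1 : G.Adj a m) (h2 : G.Adj m b) :
    m ∈ S :=
  hconv a ha b hb m (mid_dist hab hne h1 h2)

@[simp] lemma compPrism_adj_inr_inr {V : Type*} {G : SimpleGraph V} {a b : V} :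
    (compPrism G).Adj (Sum.inr a) (Sum.inr b) ↔ Gᶜ.Adj a b := Iff.rfl

@[simp] lemma compPrism_adj_inl_inl {V : Type*} {G : SimpleGraph V} {a b : V} :
    (compPrism G).Adj (Sum.inl a) (Sum.inl b) ↔ G.Adj a b := Iff.rfl

@[simp] lemma compPrism_adj_inl_inr {V : Type*} {G : SimpleGraph V} {a b : V} :
    (compPrism G).Adj (Sum.inl a) (Sum.inr b) ↔ a = b := Iff.rfl

@[simp] lemma compPrism_adj_inr_inl {V : Type*} {G : SimpleGraph V} {a b : V} :
    (compPrism G).Adj (Sum.inr a) (Sum.inl b) ↔ a = b := Iff.rfl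

theorem stmt13 {V : Type*} [Fintype V] (G : SimpleGraph V)
    (hdisc : ¬G.Preconnected)
    (hnt : ∀ c : G.ConnectedComponent, 2 ≤ c.supp.ncard)
    (S' : Set (V ⊕ V)) (hconv : IsGeodConvex (compPrism G) S')
    (x y : V) (hx : Sum.inr x ∈ S') (hy : Sum.inr y ∈ S')
    (hxy : x ≠ y) (hnonadj : ¬Gᶜ.Adj x y)
    (hmeet : ∀ c : G.ConnectedComponent, ∃ w ∈ c.supp, Sum.inl w ∈ S') :
    S' = Set.univ := by
  have hGxy : G.Adj x y := by
    by_contra h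
    exact hnonadj ⟨hxy, h⟩
  set C := G.connectedComponentMk x with hC
  -- Step A: every right vertex outside C is in S'
  have stepA : ∀ z : V, G.connectedComponentMk z ≠ C → Sum.inr z ∈ S' := by
    intro z hz
    have hxz : Gᶜ.Adj x z := by
      constructor
      · rintro rfl; exact hz rfl
      · intro h; exact hz (ConnectedComponent.sound h.symm.reachable)
    have hzy : Gᶜ.Adj z y := by
      constructor
      · rintro rfl
        exact hz (ConnectedComponent.sound hGxy.symm.reachable)
      · intro h
        exact hz ((ConnectedComponent.sound h.reachable).trans
          (ConnectedComponent.sound hGxy.symm.reachable))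
    exact mem_of_mid hconv hx hy (by simpa using hnonadj)
      (by simp [hxy]) (by simpa using hxz) (by simpa using hzy)
  -- a component D different from C
  obtain ⟨u, v, huv⟩ : ∃ u v, ¬G.Reachable u v := by
    by_contra h
    push_neg at h
    exact hdisc h
  have hD : ∃ D : G.ConnectedComponent, D ≠ C := by
    by_cases h : G.connectedComponentMk u = C
    · refine ⟨G.connectedComponentMk v, fun hvC => ?_⟩
      exact huv (ConnectedComponent.exact (h.trans hvC.symm))
    · exact ⟨_, h⟩
  obtain ⟨D, hDC⟩ := hD
  -- an edge inside D
  obtain ⟨d1, hd1, d2, hd2, hdne⟩ :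
      ∃ d1 ∈ D.supp, ∃ d2 ∈ D.supp, d1 ≠ d2 := by
    have := hnt D
    have h1 : 1 < D.supp.ncard := this
    obtain ⟨a, ha, b, hb, hab⟩ := (Set.one_lt_ncard D.supp.toFinite).mp h1
    exact ⟨a, ha, b, hb, hab⟩
  have hreach : G.Reachable d1 d2 :=
    ConnectedComponent.exact ((ConnectedComponent.mem_supp_iff _ _).mp hd1 |>.trans
      ((ConnectedComponent.mem_supp_iff _ _).mp hd2).symm)
  obtain ⟨p⟩ := hreach
  obtain ⟨e2', hedge'⟩ : ∃ e2, G.Adj d1 e2 := by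
    cases p with
    | nil => exact absurd rfl hdne
    | cons h q => exact ⟨_, h⟩
  set e1 := d1
  set e2 := e2'
  have hedge : G.Adj e1 e2 := hedge'
  have he1 : G.connectedComponentMk e1 = D := (ConnectedComponent.mem_supp_iff _ _).mp hd1
  have he2 : G.connectedComponentMk e2 = D := by
    rw [← he1]
    exact ConnectedComponent.sound hedge.symm.reachable
  have he1S : Sum.inr e1 ∈ S' := stepA e1 (by rw [he1]; exact hDC)
  have he2S : Sum.inr e2 ∈ S' := stepA e2 (by rw [he2]; exact hDC)
  -- Step B: all right vertices are in S'
  have allR : ∀ z : V, Sum.inr z ∈ S' := by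
    intro z
    by_cases hz : G.connectedComponentMk z = D
    · exact stepA z (by rw [hz]; exact hDC)
    · have h1 : Gᶜ.Adj e1 z := by
        constructor
        · rintro rfl; exact hz he1
        · intro h; exact hz ((ConnectedComponent.sound h.symm.reachable).symm ▸ he1)
      have h2 : Gᶜ.Adj z e2 := by
        constructor
        · rintro rfl; exact hz he2
        · intro h; exact hz ((ConnectedComponent.sound h.reachable).trans he2)
      exact mem_of_mid hconv he1S he2S (by simp [hedge]) (by simp [hedge.ne])
        (by simpa using h1) (by simpa using h2)
  -- one step of left spreading
  have hstep : ∀ a b : V, G.Adj a b → Sum.inl a ∈ S' → Sum.inl b ∈ S' := by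
    intro a b hab haS
    exact mem_of_mid hconv haS (allR b) (by simp [hab.ne]) (by simp)
      (by simpa using hab) (by simp)
  -- left spreading along walks
  have spread : ∀ (a b : V), G.Reachable a b → Sum.inl a ∈ S' → Sum.inl b ∈ S' := by
    intro a b hr
    obtain ⟨p⟩ := hr
    induction p with
    | nil => exact id
    | cons h q ih => exact fun ha => ih (hstep _ _ h ha)
  ext w
  simp only [Set.mem_univ, iff_true]
  cases w with
  | inl v =>
    obtain ⟨a, haSupp, haS⟩ := hmeet (G.connectedComponentMk v)
    exact spread a v (ConnectedComponent.exact
      ((ConnectedComponent.mem_supp_iff _ _).mp haSupp)) haS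
  | inr v => exact allR v
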